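/- arXiv:2202.07459 — 8 statements merged into one kernel-verified Lean document; each statement's English description precedes it below -/
import Mathlib

section
/- If R is a 2-torsion free semiprime ring and f : R → R is an additive map such that [f(x), x] lies in the center Z(R) for all x in R, then [f(x), x] = 0 for all x in R. -/
/-- If `R` is a 2-torsion free semiprime ring and `f : R → R` is an additive map
such that `[f x, x]` is central for all `x`, then `[f x, x] = 0` for all `x`. -/
theorem centralizing_additive_map_is_commuting
    {R : Type*} [Ring R]
    (hsemiprime : ∀ a : R, (∀ x : R, a * x * a = 0) → a = 0)
    (htorsion : ∀ x : R, x + x = 0 → x = 0)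
    (f : R → R) (hadd : ∀ x y : R, f (x + y) = f x + f y)
    (hcent : ∀ x : R, f x * x - x * f x ∈ Set.center R) :
    ∀ x : R, f x * x - x * f x = 0 := by
  intro x
  obtain ⟨c, hcdef, hc⟩ : ∃ c : R, c = f x * x - x * f x ∧ ∀ b : R, b * c = c * b :=
    ⟨_, rfl, fun b => (Semigroup.mem_center_iff.mp (hcent x)) b⟩
  obtain ⟨c2, hc2def, hc2⟩ :
      ∃ c2 : R, c2 = f (x * x) * (x * x) - (x * x) * f (x * x) ∧ ∀ b : R, b * c2 = c2 * b :=
    ⟨_, rfl, fun b => (Semigroup.mem_center_iff.mp (hcent (x * x))) b⟩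
  obtain ⟨c3, hc3def, hc3⟩ :
      ∃ c3 : R, c3 = (f x + f (x * x)) * (x + x * x) - (x + x * x) * (f x + f (x * x)) ∧
        ∀ b : R, b * c3 = c3 * b := by
    refine ⟨_, ?_, fun b => (Semigroup.mem_center_iff.mp (hcent (x + x * x))) b⟩
    rw [hadd]
  rw [← hcdef]
  -- work with a = f x, h = f (x*x) as opaque atoms
  generalize hA : f x = a at hcdef hc3def
  generalize hH : f (x * x) = h at hc2def hc3def
  clear hA hH hadd hcent f
  -- B := c3 - c - c2 is central
  have hB : ∀ b : R, b * (c3 - c - c2) = (c3 - c - c2) * b := by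
    intro b
    linear_combination (norm := noncomm_ring) hc3 b - hc b - hc2 b
  -- [a, x²] = 2 c x
  have h2 : a * (x * x) - (x * x) * a = 2 * (c * x) := by
    linear_combination (norm := noncomm_ring) -(hcdef * x) - x * hcdef + hc x
  -- [h, x] = B - 2 c x
  have h3 : h * x - x * h = (c3 - c - c2) - 2 * (c * x) := by
    linear_combination (norm := noncomm_ring) -hc3def + hcdef + hc2def - h2
  -- c2 = 2 B x - 4 c x²
  have h4 : c2 = 2 * ((c3 - c - c2) * x) - 4 * (c * (x * x)) := by
    linear_combination (norm := noncomm_ring) hc2def + h3 * x + x * h3 + hB x - 2 * (hc x * x)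
  -- commute with a : B c = 4 c² x
  have h5 : ((c3 - c - c2) * c - 4 * (c * (c * x))) +
      ((c3 - c - c2) * c - 4 * (c * (c * x))) = 0 := by
    linear_combination (norm := noncomm_ring) hc2 a - (a * h4 - h4 * a)
      + 2 * ((c3 - c - c2) * hcdef) - 2 * (hB a * x) + 4 * (c * h2) + 4 * (hc a * (x * x))
  have h6 : (c3 - c - c2) * c = 4 * (c * (c * x)) := by
    have := htorsion _ h5
    linear_combination (norm := noncomm_ring) this
  -- 4 c³ = 0
  have h7 : (c * (c * c) + c * (c * c)) + (c * (c * c) + c * (c * c)) = 0 := by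
    linear_combination (norm := noncomm_ring) -(a * h6 - h6 * a) + hB a * c
      + (c3 - c - c2) * hc a - 4 * (c * hc a * x) - 4 * (hc a * (c * x))
      + 4 * (c * c * hcdef)
  have h8 : c * (c * c) = 0 := htorsion _ (htorsion _ h7)
  -- semiprime, twice
  have h9 : c * c = 0 := by
    apply hsemiprime
    intro y
    linear_combination (norm := noncomm_ring) c * c * hc y * c + c * c * (c * hc y)
      + c * h8 * y
  have h10 : c = 0 := by
    apply hsemiprime
    intro y
    linear_combination (norm := noncomm_ring) c * hc y + h9 * y
  exact h10
end

section
/- If R is a 2-torsion free semiprime ring with involution * and f : R → R is an additive map such that [f(x), x*] lies in the center Z(R) for all x in R, then [f(x), x*] = 0 for all x in R. -/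
private theorem key_commuting {R : Type*} [Ring R]
    (hsp : ∀ a : R, (∀ x : R, a * x * a = 0) → a = 0)
    (ht : ∀ x : R, x + x = 0 → x = 0)
    (g : R → R) (hgadd : ∀ x y : R, g (x + y) = g x + g y)
    (hc : ∀ x r : R, (g x * x - x * g x) * r = r * (g x * x - x * g x)) :
    ∀ x : R, g x * x - x * g x = 0 := by
  have hB : ∀ a b r : R, ((g a * b - b * g a) + (g b * a - a * g b)) * r
      = r * ((g a * b - b * g a) + (g b * a - a * g b)) := by
    intro a b r
    have h := hc (a + b) r
    rw [hgadd] at h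
    linear_combination (norm := noncomm_ring) h - hc a r - hc b r
  intro x
  have h2 : (g x * x - x * g x) * (g x * x - x * g x)
      + (g x * x - x * g x) * (g x * x - x * g x) = 0 := by
    linear_combination (norm := noncomm_ring)
      hB (g x) (x*x) x - hB x (g x) (x*x) - hB x (x*x) (g x)
      - hc x x * g x + hc x (g x) * x + hc x (g x * x) + hc x (g (x*x))
  have hc2 : (g x * x - x * g x) * (g x * x - x * g x) = 0 := ht _ h2
  apply hsp
  intro r
  calc (g x * x - x * g x) * r * (g x * x - x * g x)
      = r * (g x * x - x * g x) * (g x * x - x * g x) := by rw [hc x r]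
    _ = r * ((g x * x - x * g x) * (g x * x - x * g x)) := by rw [mul_assoc]
    _ = 0 := by rw [hc2, mul_zero]

/-- If `R` is a 2-torsion free semiprime ring with involution `s` and `f : R → R`
is additive with `[f x, s x]` central for all `x`, then `[f x, s x] = 0`. -/
theorem star_centralizing_additive_map_is_star_commuting
    {R : Type*} [Ring R]
    (hsemiprime : ∀ a : R, (∀ x : R, a * x * a = 0) → a = 0)
    (htorsion : ∀ x : R, x + x = 0 → x = 0)
    (s : R → R)
    (hsadd : ∀ x y : R, s (x + y) = s x + s y)
    (hsmul : ∀ x y : R, s (x * y) = s y * s x)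
    (hsinv : ∀ x : R, s (s x) = x)
    (f : R → R) (hadd : ∀ x y : R, f (x + y) = f x + f y)
    (hcent : ∀ x : R, f x * s x - s x * f x ∈ Set.center R) :
    ∀ x : R, f x * s x - s x * f x = 0 := by
  set g : R → R := fun y => f (s y) with hg
  have hgadd : ∀ x y : R, g (x + y) = g x + g y := by
    intro x y; simp only [hg, hsadd, hadd]
  have hc : ∀ x r : R, (g x * x - x * g x) * r = r * (g x * x - x * g x) := by
    intro x r
    have h := (hcent (s x)).comm r
    rwa [hsinv] at h
  intro x
  have h := key_commuting hsemiprime htorsion g hgadd hc (s x)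
  simp only [hg, hsinv] at h
  exact h
end

section
/- Let R be a semiprime ring and a ∈ R a fixed element such that a[x,y] = 0 for all x, y in R. Then there exists an ideal I of R with a ∈ I ⊆ Z(R). -/
/-- If `R` is semiprime and `a * [x,y] = 0` for all `x y`, then there is an ideal
`I` of `R` with `a ∈ I ⊆ Z(R)`. -/
theorem mem_central_ideal_of_annihilates_commutators
    {R : Type*} [Ring R]
    (hsemiprime : ∀ b : R, (∀ x : R, b * x * b = 0) → b = 0)
    (a : R) (ha : ∀ x y : R, a * (x * y - y * x) = 0) :
    ∃ I : TwoSidedIdeal R, a ∈ I ∧ (∀ x : R, x ∈ I → x ∈ Set.center R) := by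
  have swap : ∀ x y : R, a * (x * y) = a * (y * x) := by
    intro x y
    have := ha x y
    rw [mul_sub, sub_eq_zero] at this
    exact this
  -- key: a * u * (a*x - x*a) = 0 for all u x
  have L : ∀ u x : R, a * u * (a * x - x * a) = 0 := by
    intro u x
    have h1 : a * (u * a * x) = a * (x * (u * a)) := swap (u * a) x
    have h2 : a * (x * u * a) = a * (a * (x * u)) := swap (x * u) a
    have h3 : a * (u * x * a) = a * (a * (u * x)) := swap (u * x) a
    have h4 : a * (x * u - u * x) = 0 := ha x u
    calc a * u * (a * x - x * a)
        = a * (u * a * x) - a * (u * x * a) := by noncomm_ring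
      _ = a * (x * (u * a)) - a * (a * (u * x)) := by rw [h1, h3]
      _ = a * (x * u * a) - a * (a * (u * x)) := by noncomm_ring
      _ = a * (a * (x * u)) - a * (a * (u * x)) := by rw [h2]
      _ = a * (a * (x * u - u * x)) := by noncomm_ring
      _ = 0 := by simp [h4]
  -- a is central
  have hc : ∀ x : R, a * x = x * a := by
    intro x
    have : a * x - x * a = 0 := by
      apply hsemiprime
      intro r
      have e1 : a * (x * r) * (a * x - x * a) = 0 := L (x * r) x
      have e2 : a * r * (a * x - x * a) = 0 := L r x
      calc (a * x - x * a) * r * (a * x - x * a)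
          = a * (x * r) * (a * x - x * a) - x * (a * r * (a * x - x * a)) := by
            noncomm_ring
        _ = 0 := by rw [e1, e2, mul_zero, sub_zero]
    exact sub_eq_zero.mp this
  refine ⟨TwoSidedIdeal.mk' {z : R | ∃ r : R, z = r * a}
    ⟨0, by simp⟩
    (fun {x y} ⟨r, hr⟩ ⟨s, hs⟩ => ⟨r + s, by rw [hr, hs, add_mul]⟩)
    (fun {x} ⟨r, hr⟩ => ⟨-r, by rw [hr, neg_mul]⟩)
    (fun {x y} ⟨r, hr⟩ => ⟨x * r, by rw [hr, mul_assoc]⟩)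
    (fun {x y} ⟨r, hr⟩ => ⟨r * y, by rw [hr, mul_assoc, mul_assoc, hc y]⟩), ?_, ?_⟩
  · rw [TwoSidedIdeal.mem_mk']
    exact ⟨1, (one_mul a).symm⟩
  · intro x hx
    rw [TwoSidedIdeal.mem_mk'] at hx
    obtain ⟨r, rfl⟩ := hx
    rw [Semigroup.mem_center_iff]
    intro y
    have h5 : a * (r * y - y * r) = 0 := ha r y
    have h6 : (r * y - y * r) * a = 0 := by rw [← hc]; exact h5
    calc y * (r * a) = y * r * a := by rw [mul_assoc]
      _ = r * y * a := by
          have : r * y * a - y * r * a = 0 := by rw [← sub_mul]; exact h6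
          exact (sub_eq_zero.mp this).symm
      _ = r * (a * y) := by rw [mul_assoc, hc y]
      _ = r * a * y := by rw [mul_assoc]
end

section
/- Let R be a 2-torsion free ring with no nonzero central ideal. If δ : R → R is a centrally extended Jordan derivation, i.e., δ(x+y) − δ(x) − δ(y) ∈ Z(R) and δ(x∘y) − δ(x)∘y − x∘δ(y) ∈ Z(R) for all x, y ∈ R (where x∘y = xy + yx), then δ is additive. -/
/-- A centrally extended Jordan derivation on a 2-torsion free ring with no
nonzero central ideal is additive. -/
theorem ce_jordan_derivation_additive_of_no_central_ideal
    {R : Type*} [Ring R]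
    (htorsion : ∀ x : R, x + x = 0 → x = 0)
    (hnocentral : ∀ I : TwoSidedIdeal R, (∀ x : R, x ∈ I → x ∈ Set.center R) →
      ∀ x : R, x ∈ I → x = 0)
    (δ : R → R)
    (hA : ∀ x y : R, δ (x + y) - δ x - δ y ∈ Set.center R)
    (hB : ∀ x y : R, δ (x * y + y * x) - (δ x * y + y * δ x) - (x * δ y + δ y * x)
      ∈ Set.center R) :
    ∀ x y : R, δ (x + y) = δ x + δ y := by
  have hcent : ∀ a : R, a ∈ Set.center R ↔ ∀ g : R, g * a = a * g :=
    fun a => Semigroup.mem_center_iff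
  have hadd : ∀ a b : R, a ∈ Set.center R → b ∈ Set.center R → a + b ∈ Set.center R := by
    intro a b ha hb
    rw [hcent] at ha hb ⊢
    intro g; rw [mul_add, add_mul, ha g, hb g]
  have hneg : ∀ a : R, a ∈ Set.center R → -a ∈ Set.center R := by
    intro a ha
    rw [hcent] at ha ⊢
    intro g; rw [mul_neg, neg_mul, ha g]
  intro x y
  set c := δ (x + y) - δ x - δ y with hc_def
  have hc : c ∈ Set.center R := hA x y
  have key : ∀ z : R, c * z + c * z ∈ Set.center R := by
    intro z
    have h1 := hB (x + y) z
    have h2 := hB x z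
    have h3 := hB y z
    have h4 := hA (x * z + z * x) (y * z + z * y)
    have harg : (x + y) * z + z * (x + y) = (x * z + z * x) + (y * z + z * y) := by
      noncomm_ring
    rw [harg] at h1
    have h5 := hadd _ _ (hadd _ _ h4 h2) h3
    have e := hadd _ _ h5 (hneg _ h1)
    have hzc : z * c = c * z := (hcent c).1 hc z
    have heq : c * z + c * z =
        δ (x * z + z * x + (y * z + z * y)) - δ (x * z + z * x) - δ (y * z + z * y) +
          (δ (x * z + z * x) - (δ x * z + z * δ x) - (x * δ z + δ z * x)) +
          (δ (y * z + z * y) - (δ y * z + z * δ y) - (y * δ z + δ z * y)) +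
        -(δ (x * z + z * x + (y * z + z * y)) -
            (δ (x + y) * z + z * δ (x + y)) - ((x + y) * δ z + δ z * (x + y))) := by
      nth_rewrite 2 [← hzc]
      rw [hc_def]
      simp only [sub_mul, mul_sub, add_mul, mul_add]
      abel
    rw [heq]
    exact e
  set d := c + c with hd_def
  have hdc : ∀ a : R, a * d = d * a := fun a => (hcent d).1 (hadd c c hc hc) a
  have hdz : ∀ s : R, d * s ∈ Set.center R := by
    intro s
    have := key s
    rwa [hd_def, add_mul]
  let I : TwoSidedIdeal R := TwoSidedIdeal.mk' {r : R | ∃ s, r = d * s}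
    ⟨0, by rw [mul_zero]⟩
    (fun ha hb => by
      obtain ⟨s, hs⟩ := ha; obtain ⟨t, ht⟩ := hb
      exact ⟨s + t, by rw [hs, ht, mul_add]⟩)
    (fun ha => by
      obtain ⟨s, hs⟩ := ha
      exact ⟨-s, by rw [hs, mul_neg]⟩)
    (fun {a b} hb => by
      obtain ⟨s, hs⟩ := hb
      exact ⟨a * s, by rw [hs, ← mul_assoc, hdc a, mul_assoc]⟩)
    (fun {a b} ha => by
      obtain ⟨s, hs⟩ := ha
      exact ⟨s * b, by rw [hs, mul_assoc]⟩)
  have hIc : ∀ r : R, r ∈ I → r ∈ Set.center R := by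
    intro r hr
    obtain ⟨s, hs⟩ := (TwoSidedIdeal.mem_mk' _ _ _ _ _ _ r).1 hr
    rw [hs]
    exact hdz s
  have hd0 : d = 0 := hnocentral I hIc d
    ((TwoSidedIdeal.mem_mk' _ _ _ _ _ _ d).2 ⟨1, (mul_one d).symm⟩)
  have hc0 : c = 0 := htorsion c (by rw [← hd_def]; exact hd0)
  have : δ (x + y) - (δ x + δ y) = 0 := by rw [← sub_sub]; exact hc0
  exact sub_eq_zero.mp this
end

section
/- Let R be a 2-torsion free noncommutative prime ring. Every centrally extended Jordan derivation δ : R → R (i.e., δ(x+y) − δ(x) − δ(y) ∈ Z(R) and δ(x∘y) − δ(x)∘y − x∘δ(y) ∈ Z(R) for all x, y) is additive. -/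
/-- A centrally extended Jordan derivation on a 2-torsion free noncommutative
prime ring is additive. -/
theorem ce_jordan_derivation_additive_of_prime
    {R : Type*} [Ring R]
    (hprime : ∀ a b : R, (∀ x : R, a * x * b = 0) → a = 0 ∨ b = 0)
    (hnoncomm : ¬ (∀ x y : R, x * y = y * x))
    (htorsion : ∀ x : R, x + x = 0 → x = 0)
    (δ : R → R)
    (hA : ∀ x y : R, δ (x + y) - δ x - δ y ∈ Set.center R)
    (hB : ∀ x y : R, δ (x * y + y * x) - (δ x * y + y * δ x) - (x * δ y + δ y * x)
      ∈ Set.center R) :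
    ∀ x y : R, δ (x + y) = δ x + δ y := by
  intro x y
  have hcen : ∀ {a : R}, a ∈ Set.center R → ∀ g : R, g * a = a * g :=
    fun h g => (Semigroup.mem_center_iff.mp h) g
  set c := δ (x + y) - δ x - δ y with hc_def
  have hc : c ∈ Set.center R := hA x y
  have hcw : ∀ w : R, w * c = c * w := hcen hc
  -- Step 1: c∘z is central for every z
  have hmem : ∀ z : R, c * z + z * c ∈ Set.center R := by
    intro z
    have e1 := hB (x + y) z
    have e2 := hB x z
    have e3 := hB y z
    have harg : (x + y) * z + z * (x + y) = (x * z + z * x) + (y * z + z * y) := by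
      noncomm_ring
    rw [harg] at e1
    have e4 := hA (x * z + z * x) (y * z + z * y)
    have hsum : c * z + z * c =
        (δ (x * z + z * x) - (δ x * z + z * δ x) - (x * δ z + δ z * x)) +
        (δ (y * z + z * y) - (δ y * z + z * δ y) - (y * δ z + δ z * y)) +
        (δ (x * z + z * x + (y * z + z * y)) - δ (x * z + z * x) - δ (y * z + z * y)) -
        (δ (x * z + z * x + (y * z + z * y)) - (δ (x + y) * z + z * δ (x + y)) -
          ((x + y) * δ z + δ z * (x + y))) := by
      rw [hc_def]; noncomm_ring
    rw [hsum]
    have := Set.add_mem_center (Set.add_mem_center (Set.add_mem_center e2 e3) e4)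
      (Set.neg_mem_center e1)
    simpa [sub_eq_add_neg] using this
  -- Step 2: c * [z,w] = 0 for all z, w
  have key2 : ∀ z w : R, c * (z * w) = c * (w * z) := by
    intro z w
    have h1 := hcen (hmem z) w
    rw [hcw z] at h1
    have h5 : c * (z * w) + c * (z * w) = c * (w * z) + c * (w * z) := by
      calc c * (z * w) + c * (z * w) = (c * z + c * z) * w := by noncomm_ring
        _ = w * (c * z + c * z) := h1.symm
        _ = c * (w * z) + c * (w * z) := by
            rw [mul_add, ← mul_assoc w c z, hcw w, mul_assoc]
    have h6 : (c * (z * w) - c * (w * z)) + (c * (z * w) - c * (w * z)) = 0 := by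
      rw [show (c * (z * w) - c * (w * z)) + (c * (z * w) - c * (w * z)) =
        (c * (z * w) + c * (z * w)) - (c * (w * z) + c * (w * z)) by abel, h5, sub_self]
    exact sub_eq_zero.mp (htorsion _ h6)
  -- Step 3: primeness forces c = 0
  push_neg at hnoncomm
  obtain ⟨z, w, hzw⟩ := hnoncomm
  have hu : z * w - w * z ≠ 0 := sub_ne_zero.mpr hzw
  have hcu : c * (z * w - w * z) = 0 := by rw [mul_sub, key2 z w, sub_self]
  have hall : ∀ r : R, c * r * (z * w - w * z) = 0 := by
    intro r
    calc c * r * (z * w - w * z) = r * (c * (z * w - w * z)) := by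
          rw [← hcw r, mul_assoc]
      _ = 0 := by rw [hcu, mul_zero]
  rcases hprime c (z * w - w * z) hall with h | h
  · rw [hc_def] at h
    rw [sub_sub] at h
    exact sub_eq_zero.mp h
  · exact absurd h hu
end

section
/- Let R be a prime ring with extended centroid C. If an additive map F : R → R is commuting on R (i.e., [F(x), x] = 0 for all x ∈ R), then there exist λ ∈ C and an additive map ξ : R → C such that F(x) = λx + ξ(x) for all x ∈ R. -/
/-- `J` is a dense right ideal of `R`. -/
def IsDenseRightIdeal {R : Type*} [Ring R] (J : Set R) : Prop :=
  (0 : R) ∈ J ∧ (∀ a ∈ J, ∀ b ∈ J, a + b ∈ J) ∧ (∀ a ∈ J, ∀ r : R, a * r ∈ J) ∧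
    (∀ a b : R, a ≠ 0 → ∃ r : R, a * r ≠ 0 ∧ b * r ∈ J)

section BresarAux

variable {R Q : Type*} [Ring R] [Ring Q] (ι : R →+* Q)

/-- If `z ∈ Q` annihilates (from the left) the image of a dense right ideal, then `z = 0`. -/
private lemma bresar_lemD (hinj : Function.Injective ι)
    (hquot : ∀ q : Q, ∃ J : Set R, IsDenseRightIdeal J ∧
      (∀ j ∈ J, ∃ r : R, q * ι j = ι r) ∧ (q ≠ 0 → ∃ j ∈ J, q * ι j ≠ 0))
    (J : Set R) (hJ : IsDenseRightIdeal J) (z : Q) (hz : ∀ j ∈ J, z * ι j = 0) : z = 0 := by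
  by_contra hz0
  obtain ⟨Jz, hJz, hmapz, hfz⟩ := hquot z
  obtain ⟨j₀, hj₀, hne⟩ := hfz hz0
  obtain ⟨r, hr⟩ := hmapz j₀ hj₀
  have hr0 : r ≠ 0 := by rintro rfl; rw [map_zero] at hr; exact hne hr
  obtain ⟨s, hs1, hs2⟩ := hJ.2.2.2 r j₀ hr0
  have h1 : z * ι (j₀ * s) = ι (r * s) := by
    rw [map_mul, map_mul, ← mul_assoc, hr]
  rw [hz _ hs2] at h1
  exact hs1 (hinj (by rw [← h1, map_zero]))

/-- An element of `Q` commuting with the image of `R` is central in `Q`. -/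
private lemma bresar_lemC (hinj : Function.Injective ι)
    (hquot : ∀ q : Q, ∃ J : Set R, IsDenseRightIdeal J ∧
      (∀ j ∈ J, ∃ r : R, q * ι j = ι r) ∧ (q ≠ 0 → ∃ j ∈ J, q * ι j ≠ 0))
    (z : Q) (hz : ∀ r : R, z * ι r = ι r * z) : z ∈ Set.center Q := by
  rw [Semigroup.mem_center_iff]
  intro q
  obtain ⟨Jq, hJq, hmapq, -⟩ := hquot q
  have hv : ∀ j ∈ Jq, (z * q - q * z) * ι j = 0 := by
    intro j hj
    obtain ⟨r, hr⟩ := hmapq j hj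
    have : z * q * ι j = q * z * ι j := by
      rw [mul_assoc, hr, hz r, ← hr, mul_assoc, ← hz j, ← mul_assoc]
    rw [sub_mul, this, sub_self]
  have := bresar_lemD ι hinj hquot Jq hJq _ hv
  have h2 : z * q = q * z := by rwa [sub_eq_zero] at this
  exact h2.symm

/-- Primeness of `R` extends to a mixed statement on `Q`. -/
private lemma bresar_lemP1 (hinj : Function.Injective ι)
    (hquot : ∀ q : Q, ∃ J : Set R, IsDenseRightIdeal J ∧
      (∀ j ∈ J, ∃ r : R, q * ι j = ι r) ∧ (q ≠ 0 → ∃ j ∈ J, q * ι j ≠ 0))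
    (hprime : ∀ a b : R, (∀ x : R, a * x * b = 0) → a = 0 ∨ b = 0)
    (A e : Q) (h : ∀ t : R, A * ι t * e = 0) (hA : A ≠ 0) : e = 0 := by
  by_contra he
  obtain ⟨JA, hJA, hmapA, hfA⟩ := hquot A
  obtain ⟨j, hj, hAj⟩ := hfA hA
  obtain ⟨rA, hrA⟩ := hmapA j hj
  have hrA0 : rA ≠ 0 := by rintro rfl; rw [map_zero] at hrA; exact hAj hrA
  obtain ⟨JE, hJE, hmapE, hfE⟩ := hquot e
  obtain ⟨k, hk, hek⟩ := hfE he
  obtain ⟨rE, hrE⟩ := hmapE k hk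
  have hrE0 : rE ≠ 0 := by rintro rfl; rw [map_zero] at hrE; exact hek hrE
  have : ∀ s : R, rA * s * rE = 0 := by
    intro s
    apply hinj
    rw [map_zero]
    calc ι (rA * s * rE) = (A * ι j) * ι s * ι rE := by rw [hrA, map_mul, map_mul]
      _ = A * ι (j * s) * (e * ι k) := by rw [hrE, map_mul]; simp only [mul_assoc]
      _ = (A * ι (j * s) * e) * ι k := by simp only [mul_assoc]
      _ = 0 := by rw [h (j*s), zero_mul]
  rcases hprime rA rE this with h' | h' <;> [exact hrA0 h'; exact hrE0 h']

/-- The key purely ring-theoretic identity satisfied by any additive commuting-type map: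
from the linearized commuting identity one deduces
`[v,x] t [u,F y] = [v,F x] t [u,y]`. -/
private lemma bresar_keyId {R : Type*} [Ring R] (F : R → R)
    (h1 : ∀ s t : R, F s * t - t * F s = s * F t - F t * s)
    (x y u v t : R) :
    (v*x - x*v) * t * (u * F y - F y * u) = (v * F x - F x * v) * t * (u*y - y*u) := by
  have h3 : ∀ t : R, F (x*y) * t - t * F (x*y)
      = x*(F y*t - t*F y) + (F x*t - t*F x)*y := by
    intro t
    rw [h1 (x*y) t, h1 y t, h1 x t]
    noncomm_ring
  have m : ∀ t : R, (F (x*y) * t - t * F (x*y)) - (x*(F y*t - t*F y) + (F x*t - t*F x)*y) = 0 :=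
    fun t => sub_eq_zero.mpr (h3 t)
  have A := m (t*u)
  have B := m t
  have C := m (v*t*u)
  have D := m (v*t)
  have E : (v*x - x*v) * t * (u * F y - F y * u) - (v * F x - F x * v) * t * (u*y - y*u)
      = v * ((F (x*y) * (t*u) - (t*u) * F (x*y)) - (x*(F y*(t*u) - (t*u)*F y) + (F x*(t*u) - (t*u)*F x)*y))
        - (v * ((F (x*y) * t - t * F (x*y)) - (x*(F y*t - t*F y) + (F x*t - t*F x)*y))) * u
        - ((F (x*y) * (v*t*u) - (v*t*u) * F (x*y)) - (x*(F y*(v*t*u) - (v*t*u)*F y) + (F x*(v*t*u) - (v*t*u)*F x)*y))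
        + ((F (x*y) * (v*t) - (v*t) * F (x*y)) - (x*(F y*(v*t) - (v*t)*F y) + (F x*(v*t) - (v*t)*F x)*y)) * u := by
    noncomm_ring
  rw [A, B, C, D] at E
  simp only [mul_zero, zero_mul, sub_zero, add_zero, zero_sub, neg_zero] at E
  exact sub_eq_zero.mp E

/-- Martindale-type dependence lemma: if `a x b = b x a` for all `x` and `a ≠ 0`,
then `b = lam * a` for a central `lam ∈ Q`. -/
private lemma bresar_genDep (hinj : Function.Injective ι)
    (hquot : ∀ q : Q, ∃ J : Set R, IsDenseRightIdeal J ∧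
      (∀ j ∈ J, ∃ r : R, q * ι j = ι r) ∧ (q ≠ 0 → ∃ j ∈ J, q * ι j ≠ 0))
    (hmax : ∀ J : Set R, IsDenseRightIdeal J →
      ∀ f : R → R, (∀ a ∈ J, ∀ b ∈ J, f (a + b) = f a + f b) →
        (∀ a ∈ J, ∀ r : R, f (a * r) = f a * r) →
        ∃ q : Q, ∀ j ∈ J, ι (f j) = q * ι j)
    (hprime : ∀ a b : R, (∀ x : R, a * x * b = 0) → a = 0 ∨ b = 0)
    (a b : R) (hrel : ∀ x : R, a * x * b = b * x * a) (ha : a ≠ 0) :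
    ∃ lam : Q, lam ∈ Set.center Q ∧ ι b = lam * ι a := by
  classical
  set T : Set (R × R) := {p | ∃ x y : R, p = (x*a*y, x*b*y)} with hT
  set G := AddSubgroup.closure T with hG
  have f1 : ∀ p ∈ G, ∀ u : R, a * u * p.2 = b * u * p.1 := by
    intro p hp
    induction hp using AddSubgroup.closure_induction with
    | mem q hq =>
        obtain ⟨x, y, rfl⟩ := hq
        intro u
        calc a * u * (x*b*y) = (a*(u*x)*b)*y := by noncomm_ring
          _ = (b*(u*x)*a)*y := by rw [hrel]
          _ = b * u * (x*a*y) := by noncomm_ring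
    | zero => intro u; simp
    | add p q hp hq ihp ihq =>
        intro u
        have : (p + q).1 = p.1 + q.1 ∧ (p + q).2 = p.2 + q.2 := ⟨rfl, rfl⟩
        rw [this.1, this.2, mul_add, mul_add, ihp u, ihq u]
    | neg p hp ihp =>
        intro u
        have : (-p).1 = -p.1 ∧ (-p).2 = -p.2 := ⟨rfl, rfl⟩
        rw [this.1, this.2, mul_neg, mul_neg, ihp u]
  have f2 : ∀ p ∈ G, ∀ r : R, (p.1 * r, p.2 * r) ∈ G := by
    intro p hp
    induction hp using AddSubgroup.closure_induction with
    | mem q hq =>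
        obtain ⟨x, y, rfl⟩ := hq
        intro r
        exact AddSubgroup.subset_closure ⟨x, y*r, by simp [mul_assoc]⟩
    | zero => intro r; simpa [Prod.mk_zero_zero] using AddSubgroup.zero_mem G
    | add p q hp hq ihp ihq =>
        intro r
        have := AddSubgroup.add_mem G (ihp r) (ihq r)
        simpa [Prod.ext_iff, add_mul] using this
    | neg p hp ihp =>
        intro r
        have := AddSubgroup.neg_mem G (ihp r)
        simpa [Prod.ext_iff, neg_mul] using this
  have f3 : ∀ p ∈ G, ∀ u : R, (u * p.1, u * p.2) ∈ G := by
    intro p hp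
    induction hp using AddSubgroup.closure_induction with
    | mem q hq =>
        obtain ⟨x, y, rfl⟩ := hq
        intro u
        exact AddSubgroup.subset_closure ⟨u*x, y, by simp [mul_assoc]⟩
    | zero => intro u; simpa [Prod.mk_zero_zero] using AddSubgroup.zero_mem G
    | add p q hp hq ihp ihq =>
        intro u
        have := AddSubgroup.add_mem G (ihp u) (ihq u)
        simpa [Prod.ext_iff, mul_add] using this
    | neg p hp ihp =>
        intro u
        have := AddSubgroup.neg_mem G (ihp u)
        simpa [Prod.ext_iff, mul_neg] using this
  have wd : ∀ z w w' : R, (z, w) ∈ G → (z, w') ∈ G → w = w' := by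
    intro z w w' h h'
    have hsub : ((z, w) - (z, w') : R × R) ∈ G := AddSubgroup.sub_mem G h h'
    have hz : ((0 : R), w - w') ∈ G := by
      simpa [Prod.ext_iff, sub_self] using hsub
    have := f1 _ hz
    simp only [mul_zero] at this
    have h0 : ∀ u : R, a * u * (w - w') = 0 := fun u => this u
    rcases hprime a (w - w') h0 with h' | h'
    · exact absurd h' ha
    · exact sub_eq_zero.mp h'
  set I : Set R := {z | ∃ w, (z, w) ∈ G} with hI
  set g : R → R := fun z => if h : ∃ w, (z, w) ∈ G then h.choose else 0 with hg
  have gspec : ∀ z w : R, (z, w) ∈ G → g z = w := by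
    intro z w h
    have hex : ∃ w, (z, w) ∈ G := ⟨w, h⟩
    have : g z = hex.choose := by rw [hg]; exact dif_pos hex
    rw [this]
    exact wd z _ w hex.choose_spec h
  have hIdense : IsDenseRightIdeal I := by
    refine ⟨⟨0, by simpa [Prod.mk_zero_zero] using AddSubgroup.zero_mem G⟩, ?_, ?_, ?_⟩
    · rintro z ⟨w, hw⟩ z' ⟨w', hw'⟩
      refine ⟨w + w', ?_⟩
      simpa [Prod.ext_iff] using AddSubgroup.add_mem G hw hw'
    · rintro z ⟨w, hw⟩ r
      exact ⟨w * r, f2 _ hw r⟩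
    · intro u v hu
      have hex : ∃ x : R, u * x * a ≠ 0 := by
        by_contra hc
        push_neg at hc
        rcases hprime u a hc with h' | h'
        · exact hu h'
        · exact ha h'
      obtain ⟨x, hx⟩ := hex
      refine ⟨x * a, by rwa [← mul_assoc], ?_⟩
      refine ⟨v * x * b, ?_⟩
      have : ((v*x)*a*1, (v*x)*b*1) ∈ G := AddSubgroup.subset_closure ⟨v*x, 1, rfl⟩
      simpa [mul_assoc] using this
  have gadd : ∀ z ∈ I, ∀ z' ∈ I, g (z + z') = g z + g z' := by
    rintro z ⟨w, hw⟩ z' ⟨w', hw'⟩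
    have hsum : (z + z', w + w') ∈ G := by
      simpa [Prod.ext_iff] using AddSubgroup.add_mem G hw hw'
    rw [gspec z w hw, gspec z' w' hw', gspec _ _ hsum]
  have grlin : ∀ z ∈ I, ∀ r : R, g (z * r) = g z * r := by
    rintro z ⟨w, hw⟩ r
    rw [gspec z w hw, gspec _ _ (f2 _ hw r)]
  obtain ⟨lam, hlam⟩ := hmax I hIdense g gadd grlin
  have habG : ((a : R), b) ∈ G := by
    have : ((1*a*1 : R), 1*b*1) ∈ G := AddSubgroup.subset_closure ⟨1, 1, rfl⟩
    simpa using this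
  have haI : a ∈ I := ⟨b, habG⟩
  have hba : ι b = lam * ι a := by
    have := hlam a haI
    rwa [gspec a b habG] at this
  refine ⟨lam, ?_, hba⟩
  apply bresar_lemC ι hinj hquot
  intro u
  have hcomm : ∀ z ∈ I, (lam * ι u - ι u * lam) * ι z = 0 := by
    rintro z ⟨w, hw⟩
    have h1 : ι (g z) = lam * ι z := hlam z ⟨w, hw⟩
    have huz : (u * z, u * w) ∈ G := f3 _ hw u
    have h2 : ι (g (u * z)) = lam * ι (u * z) := hlam (u*z) ⟨u*w, huz⟩
    rw [gspec _ _ huz] at h2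
    rw [gspec _ _ hw] at h1
    have : lam * ι u * ι z = ι u * lam * ι z := by
      rw [mul_assoc, ← map_mul, ← h2, map_mul, mul_assoc, ← h1]
    rw [sub_mul, this, sub_self]
  exact sub_eq_zero.mp (bresar_lemD ι hinj hquot I hIdense _ hcomm)

end BresarAux

/-- Brešar's theorem: if `F` is an additive commuting map on a prime ring `R`,
then there exist `λ` in the extended centroid `C` (the center of the maximal
right ring of quotients `Q` of `R`) and an additive map `ξ : R → C` with
`F x = λ x + ξ x` for all `x`.  Here `Q` is axiomatized as a maximal right ring
of quotients of `R` via the embedding `ι`. -/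
theorem commuting_additive_map_structure
    {R Q : Type*} [Ring R] [Ring Q] (ι : R →+* Q)
    (hinj : Function.Injective ι)
    -- every element of `Q` is a "fraction": it multiplies some dense right ideal of `R` into `R`,
    -- faithfully if nonzero
    (hquot : ∀ q : Q, ∃ J : Set R, IsDenseRightIdeal J ∧
      (∀ j ∈ J, ∃ r : R, q * ι j = ι r) ∧ (q ≠ 0 → ∃ j ∈ J, q * ι j ≠ 0))
    -- maximality: every right `R`-module map from a dense right ideal into `R`
    -- is realized by left multiplication by an element of `Q`
    (hmax : ∀ J : Set R, IsDenseRightIdeal J →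
      ∀ f : R → R, (∀ a ∈ J, ∀ b ∈ J, f (a + b) = f a + f b) →
        (∀ a ∈ J, ∀ r : R, f (a * r) = f a * r) →
        ∃ q : Q, ∀ j ∈ J, ι (f j) = q * ι j)
    (hprime : ∀ a b : R, (∀ x : R, a * x * b = 0) → a = 0 ∨ b = 0)
    (F : R → R) (hadd : ∀ x y : R, F (x + y) = F x + F y)
    (hcomm : ∀ x : R, F x * x = x * F x) :
    ∃ lam : Q, lam ∈ Set.center Q ∧
      ∃ ξ : R → Q, (∀ x : R, ξ x ∈ Set.center Q) ∧
        (∀ x y : R, ξ (x + y) = ξ x + ξ y) ∧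
        (∀ x : R, ι (F x) = lam * ι x + ξ x) := by
  -- linearized commuting identity
  have h1 : ∀ s t : R, F s * t - t * F s = s * F t - F t * s := by
    intro s t
    have h := hcomm (s + t)
    rw [hadd] at h
    have h2 : (F s*t - t*F s) - (s*F t - F t*s)
        = ((F s + F t)*(s+t) - (s+t)*(F s + F t)) - (F s*s - s*F s) - (F t*t - t*F t) := by
      noncomm_ring
    rw [h, hcomm s, hcomm t] at h2
    simp only [sub_self, sub_zero] at h2
    exact sub_eq_zero.mp h2
  by_cases hc : ∀ x y : R, x * y = y * x
  · -- commutative case: `lam = 0`, `ξ = ι ∘ F`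
    refine ⟨0, Set.zero_mem_center, fun x => ι (F x), ?_, ?_, ?_⟩
    · intro x
      apply bresar_lemC ι hinj hquot
      intro r
      rw [← map_mul, ← map_mul, hc]
    · intro x y
      dsimp only
      rw [hadd, map_add]
    · intro x
      dsimp only
      rw [zero_mul, zero_add]
  · push_neg at hc
    obtain ⟨x₀, w₀, hxw⟩ := hc
    set aa : R := w₀ * x₀ - x₀ * w₀ with haa
    set bb : R := w₀ * F x₀ - F x₀ * w₀ with hbb
    have haa0 : aa ≠ 0 := sub_ne_zero.mpr (Ne.symm hxw)
    have hab : ∀ t : R, aa * t * bb = bb * t * aa := fun t =>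
      bresar_keyId F h1 x₀ x₀ w₀ w₀ t
    obtain ⟨lam, hlamc, hba⟩ := bresar_genDep ι hinj hquot hmax hprime aa bb hab haa0
    have hlam' : ∀ q : Q, q * lam = lam * q := Semigroup.mem_center_iff.mp hlamc
    have hιaa : (ι aa : Q) ≠ 0 := by
      intro h
      exact haa0 (hinj (by rw [h, map_zero]))
    -- the main pointwise identity: ι [u, F y] = lam * ι [u, y]
    have hzero : ∀ y u : R, ι (u * F y - F y * u) = lam * ι (u * y - y * u) := by
      intro y u
      have key : ∀ t : R, aa * t * (u * F y - F y * u) = bb * t * (u * y - y * u) :=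
        fun t => bresar_keyId F h1 x₀ y u w₀ t
      have hval : ∀ t : R,
          ι aa * ι t * (ι (u * F y - F y * u) - lam * ι (u * y - y * u)) = 0 := by
        intro t
        have e1 : ι aa * ι t * ι (u * F y - F y * u) = ι bb * ι t * ι (u * y - y * u) := by
          rw [← map_mul, ← map_mul, ← map_mul, ← map_mul, key t]
        have e2 : ι aa * ι t * (lam * ι (u * y - y * u))
            = ι bb * ι t * ι (u * y - y * u) := by
          rw [hba]
          calc ι aa * ι t * (lam * ι (u * y - y * u))
              = (ι aa * ι t * lam) * ι (u * y - y * u) := by simp only [mul_assoc]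
            _ = (lam * (ι aa * ι t)) * ι (u * y - y * u) := by rw [hlam' (ι aa * ι t)]
            _ = lam * ι aa * (ι t * ι (u * y - y * u)) := by simp only [mul_assoc]
            _ = lam * ι aa * ι t * ι (u * y - y * u) := by simp only [mul_assoc]
        rw [mul_sub, e1, e2, sub_self]
      exact sub_eq_zero.mp (bresar_lemP1 ι hinj hquot hprime (ι aa) _ hval hιaa)
    refine ⟨lam, hlamc, fun x => ι (F x) - lam * ι x, ?_, ?_, ?_⟩
    · intro x
      apply bresar_lemC ι hinj hquot
      intro r
      have h0 := hzero x r
      simp only [map_sub, map_mul, mul_sub] at h0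
      -- h0 : ι r * ι (F x) - ι (F x) * ι r = lam * (ι r * ι x) - lam * (ι x * ι r)
      have h0' : (ι r * ι (F x) - ι (F x) * ι r) - (lam * (ι r * ι x) - lam * (ι x * ι r)) = 0 :=
        sub_eq_zero.mpr h0
      calc (ι (F x) - lam * ι x) * ι r
          = ι (F x) * ι r - lam * (ι x * ι r) := by noncomm_ring
        _ = ι r * ι (F x) - lam * (ι r * ι x) := by
            have hd : (ι (F x) * ι r - lam * (ι x * ι r)) - (ι r * ι (F x) - lam * (ι r * ι x))
                = -((ι r * ι (F x) - ι (F x) * ι r) - (lam * (ι r * ι x) - lam * (ι x * ι r))) := by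
              abel
            rw [h0', neg_zero] at hd
            exact sub_eq_zero.mp hd
        _ = ι r * ι (F x) - ι r * (lam * ι x) := by
            rw [← mul_assoc, ← hlam' (ι r), mul_assoc]
        _ = ι r * (ι (F x) - lam * ι x) := by rw [mul_sub]
    · intro x y
      dsimp only
      rw [hadd, map_add, map_add, mul_add]
      abel
    · intro x
      dsimp only
      rw [add_comm, sub_add_cancel]
end

section
/- If R is a semiprime ring with involution *, then the center of the subring generated by the symmetric elements of R is contained in the center of R. -/
/-- Key "killing" lemma: in a semiprime ring with involution, a symmetric
element of square zero which commutes with all symmetric elements is zero. -/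
private lemma csc_aux_lemA {R : Type*} [Ring R]
    (hsemiprime : ∀ a : R, (∀ x : R, a * x * a = 0) → a = 0)
    (s : R → R)
    (hsadd : ∀ x y : R, s (x + y) = s x + s y)
    (hsmul : ∀ x y : R, s (x * y) = s y * s x)
    (hsinv : ∀ x : R, s (s x) = x)
    (w : R) (hws : s w = w) (hw2 : w * w = 0)
    (hcom : ∀ u : R, s u = u → w * u = u * w) : w = 0 := by
  have hWS : ∀ p : R, s p = p → w * p * w = 0 := by
    intro p hp
    rw [hcom p hp, mul_assoc, hw2, mul_zero]
  have L1 : ∀ v : R, w * s v * w * v * w = 0 := by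
    intro v
    have hp : s (s v * w * v) = s v * w * v := by
      rw [hsmul, hsmul, hsinv, hws, mul_assoc]
    have h := hWS _ hp
    have e : w * s v * w * v * w = w * (s v * w * v) * w := by noncomm_ring
    rw [e, h]
  have L2 : ∀ v u : R, w * v * w * s u * w + w * u * w * s v * w = 0 := by
    intro v u
    have hp : s (v * w * s u + u * w * s v) = v * w * s u + u * w * s v := by
      rw [hsadd, hsmul, hsmul, hsmul, hsmul, hsinv, hsinv, hws]
      noncomm_ring
    have h := hWS _ hp
    have e : w * v * w * s u * w + w * u * w * s v * w
        = w * (v * w * s u + u * w * s v) * w := by noncomm_ring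
    rw [e, h]
  apply hsemiprime
  intro v
  apply hsemiprime
  intro u
  have E1 : w * v * w * u * w = -(w * s u * w * s v * w) := by
    have h := L2 v (s u)
    rw [hsinv] at h
    exact eq_neg_of_add_eq_zero_left h
  have dec : w * v * w * u * (w * v * w) = (w * v * w * u * w) * (v * w) := by
    noncomm_ring
  rw [dec, E1]
  have dec2 : w * s u * w * s v * w * (v * w)
      = (w * s u) * (w * s v * w * v * w) := by noncomm_ring
  rw [neg_mul, dec2, L1 v, mul_zero, neg_zero]

/-- If `R` is a semiprime ring with involution `s`, then the center of the
subring generated by the symmetric elements is contained in `Z(R)`. -/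
theorem center_closure_symmetric_subset_center
    {R : Type*} [Ring R]
    (hsemiprime : ∀ a : R, (∀ x : R, a * x * a = 0) → a = 0)
    (s : R → R)
    (hsadd : ∀ x y : R, s (x + y) = s x + s y)
    (hsmul : ∀ x y : R, s (x * y) = s y * s x)
    (hsinv : ∀ x : R, s (s x) = x) :
    ∀ a ∈ Subring.closure {x : R | s x = x},
      (∀ x ∈ Subring.closure {x : R | s x = x}, a * x = x * a) →
        a ∈ Set.center R := by
  intro a haT hacomm
  set T := Subring.closure {x : R | s x = x} with hTdef
  -- basic facts about the involution
  have szero : s 0 = 0 := by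
    have h := hsadd 0 0
    rw [add_zero] at h
    exact (left_eq_add.mp h)
  have sneg : ∀ r : R, s (-r) = -(s r) := by
    intro r
    have h := hsadd r (-r)
    rw [add_neg_cancel, szero] at h
    exact eq_neg_of_add_eq_zero_right h.symm
  have ssub : ∀ p q : R, s (p - q) = s p - s q := by
    intro p q
    rw [sub_eq_add_neg, hsadd, sneg, sub_eq_add_neg]
  have s1 : s 1 = 1 := by
    have h : s 1 * 1 = 1 := by
      calc s 1 * 1 = s 1 * s (s 1) := by rw [hsinv]
        _ = s (s 1 * 1) := (hsmul (s 1) 1).symm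
        _ = s (s 1) := by rw [mul_one]
        _ = 1 := hsinv 1
    simpa using h
  have memS : ∀ {u : R}, s u = u → u ∈ T := fun h => Subring.subset_closure h
  have sT : ∀ t ∈ T, s t ∈ T := by
    intro t ht
    induction ht using Subring.closure_induction with
    | mem x hx =>
        have hx' : s x = x := hx
        rw [hx']; exact Subring.subset_closure hx
    | zero => rw [szero]; exact Subring.zero_mem _
    | one => rw [s1]; exact Subring.one_mem _
    | add x y hx hy ihx ihy => rw [hsadd]; exact Subring.add_mem _ ihx ihy
    | neg x hx ihx => rw [sneg]; exact Subring.neg_mem _ ihx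
    | mul x y hx hy ihx ihy => rw [hsmul]; exact Subring.mul_mem _ ihy ihx
  have ha'T : s a ∈ T := sT a haT
  have ha'comm : ∀ t ∈ T, s a * t = t * s a := by
    intro t ht
    have h2 : s t ∈ T := sT t ht
    calc s a * t = s a * s (s t) := by rw [hsinv]
      _ = s (s t * a) := (hsmul (s t) a).symm
      _ = s (a * s t) := by rw [hacomm (s t) h2]
      _ = s (s t) * s a := hsmul a (s t)
      _ = t * s a := by rw [hsinv]
  -- the master commutation lemma for central elements of T
  have keyM : ∀ b, b ∈ T → (∀ t ∈ T, b * t = t * b) → ∀ y : R,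
      (∀ t ∈ T, (b*y - y*b) * t = t * (b*y - y*b) ∧
        (b*y - y*b) * t * s y = y * t * (b*y - y*b))
      ∧ (b*y - y*b) * (b*y - y*b) = 0 := by
    intro b hbT hbc y
    have hyS : (y + s y) ∈ T := memS (by rw [hsadd, hsinv, add_comm])
    have hM1 : (b * s y - s y * b) + (b*y - y*b) = 0 := by
      have h := hbc _ hyS
      have e : (b * s y - s y * b) + (b*y - y*b) = b*(y + s y) - (y + s y)*b := by
        noncomm_ring
      rw [h, sub_self] at e
      exact e
    have hc1 : (b*y - y*b) * s y = y * (b*y - y*b) := by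
      have hyyS : (y * s y) ∈ T := memS (by rw [hsmul, hsinv])
      have z1 : b*(y * s y) - (y * s y)*b = 0 := sub_eq_zero.mpr (hbc _ hyyS)
      have e : (b*y - y*b) * s y - y * (b*y - y*b)
          = (b*(y * s y) - (y * s y)*b) - y*((b*s y - s y*b) + (b*y - y*b)) := by
        noncomm_ring
      rw [z1, hM1, mul_zero, sub_zero] at e
      exact sub_eq_zero.mp e
    have main : ∀ t ∈ T, (b*y - y*b) * t = t * (b*y - y*b) ∧
        (b*y - y*b) * t * s y = y * t * (b*y - y*b) := by
      intro t ht
      induction ht using Subring.closure_induction with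
      | mem u hu =>
          have hu' : s u = u := hu
          have hmem1 : (y*u + u*s y) ∈ T := memS (by
            rw [hsadd, hsmul, hsmul, hsinv, hu', add_comm])
          have hmem3 : (y*u*s y) ∈ T := memS (by
            rw [hsmul, hsmul, hsinv, hu', mul_assoc])
          have z1 : b*(y*u + u*s y) - (y*u + u*s y)*b = 0 :=
            sub_eq_zero.mpr (hbc _ hmem1)
          have z2 : b*u - u*b = 0 := sub_eq_zero.mpr (hbc _ (memS hu'))
          have z3 : b*(y*u*s y) - (y*u*s y)*b = 0 := sub_eq_zero.mpr (hbc _ hmem3)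
          constructor
          · have e : (b*y - y*b)*u - u*(b*y - y*b)
                = (b*(y*u + u*s y) - (y*u + u*s y)*b) - y*(b*u - u*b)
                  - (b*u - u*b)*(s y) - u*((b*s y - s y*b) + (b*y - y*b)) := by
              noncomm_ring
            rw [z1, z2, hM1] at e
            simp only [mul_zero, zero_mul, sub_zero, zero_sub, neg_zero, add_zero] at e
            exact sub_eq_zero.mp e
          · have e : (b*y - y*b)*u*s y - y*u*(b*y - y*b)
                = (b*(y*u*s y) - (y*u*s y)*b) - y*(b*u - u*b)*s y
                  - y*u*((b*s y - s y*b) + (b*y - y*b)) := by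
              noncomm_ring
            rw [z3, z2, hM1] at e
            simp only [mul_zero, zero_mul, sub_zero, zero_sub, neg_zero, add_zero] at e
            exact sub_eq_zero.mp e
      | zero => constructor <;> simp
      | one =>
          constructor
          · rw [mul_one, one_mul]
          · rw [mul_one, mul_one]; exact hc1
      | add t₁ t₂ h₁ h₂ ih₁ ih₂ =>
          have z1 : (b*y - y*b)*t₁ - t₁*(b*y - y*b) = 0 := sub_eq_zero.mpr ih₁.1
          have z2 : (b*y - y*b)*t₂ - t₂*(b*y - y*b) = 0 := sub_eq_zero.mpr ih₂.1
          have z3 : (b*y - y*b)*t₁*s y - y*t₁*(b*y - y*b) = 0 := sub_eq_zero.mpr ih₁.2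
          have z4 : (b*y - y*b)*t₂*s y - y*t₂*(b*y - y*b) = 0 := sub_eq_zero.mpr ih₂.2
          constructor
          · have e : (b*y - y*b)*(t₁+t₂) - (t₁+t₂)*(b*y - y*b)
                = ((b*y - y*b)*t₁ - t₁*(b*y - y*b)) + ((b*y - y*b)*t₂ - t₂*(b*y - y*b)) := by
              noncomm_ring
            rw [z1, z2, add_zero] at e
            exact sub_eq_zero.mp e
          · have e : (b*y - y*b)*(t₁+t₂)*s y - y*(t₁+t₂)*(b*y - y*b)
                = ((b*y - y*b)*t₁*s y - y*t₁*(b*y - y*b))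
                  + ((b*y - y*b)*t₂*s y - y*t₂*(b*y - y*b)) := by
              noncomm_ring
            rw [z3, z4, add_zero] at e
            exact sub_eq_zero.mp e
      | neg t₁ h₁ ih =>
          have z1 : (b*y - y*b)*t₁ - t₁*(b*y - y*b) = 0 := sub_eq_zero.mpr ih.1
          have z3 : (b*y - y*b)*t₁*s y - y*t₁*(b*y - y*b) = 0 := sub_eq_zero.mpr ih.2
          constructor
          · have e : (b*y - y*b)*(-t₁) - (-t₁)*(b*y - y*b)
                = -((b*y - y*b)*t₁ - t₁*(b*y - y*b)) := by noncomm_ring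
            rw [z1, neg_zero] at e
            exact sub_eq_zero.mp e
          · have e : (b*y - y*b)*(-t₁)*s y - y*(-t₁)*(b*y - y*b)
                = -((b*y - y*b)*t₁*s y - y*t₁*(b*y - y*b)) := by noncomm_ring
            rw [z3, neg_zero] at e
            exact sub_eq_zero.mp e
      | mul t₁ t₂ h₁ h₂ ih₁ ih₂ =>
          have z1 : (b*y - y*b)*t₁ - t₁*(b*y - y*b) = 0 := sub_eq_zero.mpr ih₁.1
          have z2 : (b*y - y*b)*t₂ - t₂*(b*y - y*b) = 0 := sub_eq_zero.mpr ih₂.1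
          have z3 : (b*y - y*b)*t₁*s y - y*t₁*(b*y - y*b) = 0 := sub_eq_zero.mpr ih₁.2
          have z4 : (b*y - y*b)*t₂*s y - y*t₂*(b*y - y*b) = 0 := sub_eq_zero.mpr ih₂.2
          have z5 : (b*y - y*b)*s y - y*(b*y - y*b) = 0 := sub_eq_zero.mpr hc1
          constructor
          · have e : (b*y - y*b)*(t₁*t₂) - (t₁*t₂)*(b*y - y*b)
                = ((b*y - y*b)*t₁ - t₁*(b*y - y*b))*t₂
                  + t₁*((b*y - y*b)*t₂ - t₂*(b*y - y*b)) := by noncomm_ring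
            rw [z1, z2] at e
            simp only [zero_mul, mul_zero, add_zero] at e
            exact sub_eq_zero.mp e
          · have e : (b*y - y*b)*(t₁*t₂)*s y - y*(t₁*t₂)*(b*y - y*b)
                = ((b*y - y*b)*t₁ - t₁*(b*y - y*b))*(t₂*s y)
                  - ((b*y - y*b)*t₁ - t₁*(b*y - y*b))*(s y*t₂)
                  + t₁*((b*y - y*b)*t₂*s y - y*t₂*(b*y - y*b))
                  + ((b*y - y*b)*t₁*s y - y*t₁*(b*y - y*b))*t₂
                  + (y*t₁ - t₁*y)*((b*y - y*b)*t₂ - t₂*(b*y - y*b))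
                  - t₁*((b*y - y*b)*s y - y*(b*y - y*b))*t₂ := by noncomm_ring
            rw [z1, z2, z3, z4, z5] at e
            simp only [zero_mul, mul_zero, add_zero, sub_zero, zero_add, zero_sub,
              neg_zero] at e
            exact sub_eq_zero.mp e
    refine ⟨main, ?_⟩
    have hgb := main b hbT
    have z1 : (b*y - y*b)*b*s y - y*b*(b*y - y*b) = 0 := sub_eq_zero.mpr hgb.2
    have z2 : (b*y - y*b)*b - b*(b*y - y*b) = 0 := sub_eq_zero.mpr hgb.1
    have z3 : (b*y - y*b)*s y - y*(b*y - y*b) = 0 := sub_eq_zero.mpr hc1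
    have e : (b*y - y*b)*(b*y - y*b)
        = ((b*y - y*b)*b*s y - y*b*(b*y - y*b))
          - ((b*y - y*b)*b - b*(b*y - y*b))*s y
          - b*((b*y - y*b)*s y - y*(b*y - y*b)) := by noncomm_ring
    rw [z1, z2, z3] at e
    simp only [zero_mul, mul_zero, sub_zero, zero_sub, neg_zero] at e
    exact e
  -- notation: c z = [a,z], d z = [s a, s z]
  let c : R → R := fun z => a * z - z * a
  let d : R → R := fun z => s a * s z - s z * s a
  have hc : ∀ z, c z = a * z - z * a := fun _ => rfl
  have hd : ∀ z, d z = s a * s z - s z * s a := fun _ => rfl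
  have hCcomm : ∀ z, ∀ t ∈ T, c z * t = t * c z :=
    fun z t ht => ((keyM a haT hacomm z).1 t ht).1
  have hC2 : ∀ z, c z * c z = 0 := fun z => (keyM a haT hacomm z).2
  have hDcomm : ∀ z, ∀ t ∈ T, d z * t = t * d z :=
    fun z t ht => ((keyM (s a) ha'T ha'comm (s z)).1 t ht).1
  have hD2 : ∀ z, d z * d z = 0 := fun z => (keyM (s a) ha'T ha'comm (s z)).2
  have Glink1 : ∀ z, s (c z) = -(d z) := by
    intro z
    rw [hc, hd, ssub, hsmul, hsmul]
    noncomm_ring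
  have Glink2 : ∀ z, s (d z) = -(c z) := by
    intro z
    rw [hd, hc, ssub, hsmul, hsmul, hsinv, hsinv]
    noncomm_ring
  -- step 11 : c z * d z = 0
  have h11 : ∀ z, c z * d z = 0 := by
    intro z
    have hker : ∀ v : R, c z * d z * v * c z = 0 := by
      have hker' : ∀ v : R, c z * d z * s v * c z = 0 := by
        intro v
        have h₁S : s (v * c z - d z * s v) = v * c z - d z * s v := by
          rw [ssub, hsmul, hsmul, Glink1, Glink2, hsinv]
          noncomm_ring
        have e := hCcomm z _ (memS h₁S)
        have e2 : c z * (v * c z - d z * s v) * c z = 0 := by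
          rw [e, mul_assoc, hC2 z, mul_zero]
        have e3 : c z * d z * s v * c z
            = c z * v * (c z * c z) - c z * (v * c z - d z * s v) * c z := by
          noncomm_ring
        rw [e2, hC2 z, mul_zero, sub_zero] at e3
        exact e3
      intro v
      have h := hker' (s v)
      rwa [hsinv] at h
    apply hsemiprime
    intro v
    have e : c z * d z * v * (c z * d z) = (c z * d z * v * c z) * d z := by
      noncomm_ring
    rw [e, hker v, zero_mul]
  -- step 12 : d z * c z = 0
  have h12 : ∀ z, d z * c z = 0 := by
    intro z
    have hker : ∀ v : R, d z * c z * v * d z = 0 := by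
      have hker' : ∀ v : R, d z * c z * s v * d z = 0 := by
        intro v
        have h₂S : s (v * d z - c z * s v) = v * d z - c z * s v := by
          rw [ssub, hsmul, hsmul, Glink1, Glink2, hsinv]
          noncomm_ring
        have e := hDcomm z _ (memS h₂S)
        have e2 : d z * (v * d z - c z * s v) * d z = 0 := by
          rw [e, mul_assoc, hD2 z, mul_zero]
        have e3 : d z * c z * s v * d z
            = d z * v * (d z * d z) - d z * (v * d z - c z * s v) * d z := by
          noncomm_ring
        rw [e2, hD2 z, mul_zero, sub_zero] at e3
        exact e3
      intro v
      have h := hker' (s v)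
      rwa [hsinv] at h
    apply hsemiprime
    intro v
    have e : d z * c z * v * (d z * c z) = (d z * c z * v * d z) * c z := by
      noncomm_ring
    rw [e, hker v, zero_mul]
  -- step 13 : s (c z) = -(c z)
  have hskew : ∀ z, s (c z) = -(c z) := by
    intro z
    have hd0 : c z - d z = 0 := by
      apply csc_aux_lemA hsemiprime s hsadd hsmul hsinv
      · rw [ssub, Glink1, Glink2]
        noncomm_ring
      · have e : (c z - d z) * (c z - d z)
            = (c z * c z) - (c z * d z) - (d z * c z) + (d z * d z) := by noncomm_ring
        rw [hC2 z, h11 z, h12 z, hD2 z] at e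
        simpa using e
      · intro u hu
        have h1 := hCcomm z u (memS hu)
        have h2 := hDcomm z u (memS hu)
        have z1 : c z * u - u * c z = 0 := sub_eq_zero.mpr h1
        have z2 : d z * u - u * d z = 0 := sub_eq_zero.mpr h2
        have e : (c z - d z)*u - u*(c z - d z)
            = (c z * u - u * c z) - (d z * u - u * d z) := by noncomm_ring
        rw [z1, z2, sub_zero] at e
        exact sub_eq_zero.mp e
    have hcd : c z = d z := sub_eq_zero.mp hd0
    rw [Glink1 z, ← hcd]
  -- step 14 : anticommutation
  have hanti : ∀ y z, c y * c z + c z * c y = 0 := by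
    intro y z
    have h := hC2 (y + z)
    have hyz : c (y + z) = c y + c z := by
      rw [hc, hc, hc]; noncomm_ring
    rw [hyz] at h
    have e : c y * c z + c z * c y
        = (c y + c z) * (c y + c z) - c y * c y - c z * c z := by noncomm_ring
    rw [h, hC2 y, hC2 z] at e
    simpa using e
  -- step 15 : triple products of commutators vanish
  have hK3 : ∀ u v w, c u * c v * c w = 0 := by
    intro u v w
    apply csc_aux_lemA hsemiprime s hsadd hsmul hsinv
    · -- symmetric
      have e1 : s (c u * c v * c w) = -(c w * (c v * c u)) := by
        rw [hsmul, hsmul, hskew u, hskew v, hskew w]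
        noncomm_ring
      have e2 : c w * (c v * c u)
          = -(c u * c v * c w) + ((c w * c v + c v * c w) * c u
            - c v * (c w * c u + c u * c w) + (c v * c u + c u * c v) * c w) := by
        noncomm_ring
      rw [hanti w v, hanti w u, hanti v u] at e2
      simp only [zero_mul, mul_zero, sub_zero, add_zero, zero_add, zero_sub,
        neg_zero, sub_self] at e2
      rw [e1, e2]
      simp
    · -- square zero
      have e : (c u * c v * c w) * (c u * c v * c w)
          = c u * c v * (c w * c u + c u * c w) * (c v * c w)
            - c u * (c v * c u + c u * c v) * (c w * (c v * c w))
            + (c u * c u) * (c v * (c w * (c v * c w))) := by noncomm_ring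
      rw [hanti w u, hanti v u, hC2 u] at e
      simpa using e
    · -- commutes with symmetric elements
      intro u' hu'
      have z1 : c u * u' - u' * c u = 0 := sub_eq_zero.mpr (hCcomm u u' (memS hu'))
      have z2 : c v * u' - u' * c v = 0 := sub_eq_zero.mpr (hCcomm v u' (memS hu'))
      have z3 : c w * u' - u' * c w = 0 := sub_eq_zero.mpr (hCcomm w u' (memS hu'))
      have e : (c u * c v * c w) * u' - u' * (c u * c v * c w)
          = (c u * c v) * (c w * u' - u' * c w) + c u * (c v * u' - u' * c v) * c w
            + (c u * u' - u' * c u) * (c v * c w) := by noncomm_ring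
      rw [z1, z2, z3] at e
      simp only [zero_mul, mul_zero, add_zero, zero_add] at e
      exact sub_eq_zero.mp e
  -- step 16 : pair products of commutators vanish
  have hm2 : ∀ y z, c y * c z = 0 := by
    intro y z
    apply hsemiprime
    intro v
    have hgg : a * c y - c y * a = 0 := sub_eq_zero.mpr (hCcomm y a haT).symm
    have e : (c y * c z) * v * (c y * c z)
        = c y * (c (z * v * c y)) * c z - c y * z * (c v * c y * c z)
          - c y * (z * v * (a * c y - c y * a)) * c z := by
      simp only [hc]
      noncomm_ring
    rw [hK3 y (z * v * c y) z, hK3 v y z, hgg] at e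
    simpa using e
  -- step 17/18 : every commutator vanishes
  have hfin : ∀ z, c z = 0 := by
    intro z
    apply hsemiprime
    intro v
    have e : c z * v * c z = (c (z * v)) * (c z) - z * (c v * c z) := by
      simp only [hc]
      noncomm_ring
    rw [hm2 (z * v) z, hm2 v z] at e
    simpa using e
  rw [Semigroup.mem_center_iff]
  intro g
  have h := hfin g
  rw [hc] at h
  have := sub_eq_zero.mp h
  exact this.symm
end

section
/- Let R be a 2-torsion free noncommutative prime ring. An additive map δ : R → R is a centrally extended Jordan derivation if and only if δ(x²) − δ(x)x − xδ(x) ∈ Z(R) for all x ∈ R. -/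
/-- On a 2-torsion free noncommutative prime ring, an additive map `δ` is a
centrally extended Jordan derivation iff `δ(x²) − δ(x)x − xδ(x) ∈ Z(R)` for all `x`. -/
theorem ce_jordan_derivation_iff_square_condition
    {R : Type*} [Ring R]
    (hprime : ∀ a b : R, (∀ x : R, a * x * b = 0) → a = 0 ∨ b = 0)
    (hnoncomm : ¬ (∀ x y : R, x * y = y * x))
    (htorsion : ∀ x : R, x + x = 0 → x = 0)
    (δ : R → R) (hadd : ∀ x y : R, δ (x + y) = δ x + δ y) :
    ((∀ x y : R, δ (x + y) - δ x - δ y ∈ Set.center R) ∧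
      (∀ x y : R, δ (x * y + y * x) - (δ x * y + y * δ x) - (x * δ y + δ y * x)
        ∈ Set.center R)) ↔
      (∀ x : R, δ (x * x) - δ x * x - x * δ x ∈ Set.center R) := by
  constructor
  · rintro ⟨-, h2⟩ x
    have key := h2 x x
    rw [hadd] at key
    set z := δ (x * x) - δ x * x - x * δ x with hz
    have hzz : z + z ∈ Set.center R := by
      have e : δ (x * x) + δ (x * x) - (δ x * x + x * δ x) - (x * δ x + δ x * x)
          = z + z := by rw [hz]; abel
      rwa [e] at key
    rw [Semigroup.mem_center_iff] at hzz ⊢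
    intro g
    have h1 : g * z + g * z = z * g + z * g :=
      (mul_add g z z).symm.trans ((hzz g).trans (add_mul z z g))
    have h0 : (g * z - z * g) + (g * z - z * g) = 0 := by
      rw [sub_add_sub_comm, sub_eq_zero]; exact h1
    exact sub_eq_zero.mp (htorsion _ h0)
  · intro h
    constructor
    · intro x y
      rw [hadd]
      simp [Set.zero_mem_center]
    · intro x y
      have key := h (x + y)
      have e : (x + y) * (x + y) = x * x + (x * y + y * x) + y * y := by noncomm_ring
      rw [e, hadd, hadd, hadd] at key
      rw [show δ (x + y) = δ x + δ y from hadd x y] at key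
      rw [hadd (x * y) (y * x)]
      have hx := h x
      have hy := h y
      rw [← Subring.coe_center, SetLike.mem_coe] at key hx hy ⊢
      have := sub_mem (sub_mem key hx) hy
      convert this using 1
      noncomm_ring
end
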